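/- (Claim 1, deletion case.) Let r₁, r₂ be vectors of nonnegative integers of length d and let κ ∈ [d] be such that r_{1,κ} = r_{2,κ} = 0. For any two arrays X of size (n+r_{1,1}) × ⋯ × (n+r_{1,d}) and Y of size (n+r_{2,1}) × ⋯ × (n+r_{2,d}) over Σ_q, it holds that D_{r₁}(X) ∩ D_{r₂}(Y) ≠ ∅ if and only if D_{P_κ(r₁)}(P_κ(X)) ∩ D_{P_κ(r₂)}(P_κ(Y)) ≠ ∅, where P_κ(r_j) denotes the vector of length d−1 obtained from r_j by deleting its (zero) κ-th entry, and the balls on the right-hand side consist of (d−1)-dimensional arrays over the alphabet Σ_{q^n}. -/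

import Mathlib

/-- A `q`-ary `d`-dimensional array: a size vector `size : Fin d → ℕ` together with an
entry of the alphabet `Fin q` for every index tuple inside the box
`[size 0] × ⋯ × [size (d-1)]`. -/
structure Arr (q d : ℕ) where
  size : Fin d → ℕ
  val : ∀ x : Fin d → ℕ, (∀ i, x i < size i) → Fin q

/-- The index map associated with inserting a hyperplane at position `k` along axis `i`:
coordinates below `k` stay put, the others are shifted up by one (so that position `k`
along axis `i` is the freshly inserted hyperplane). -/
def insIdx {d : ℕ} (i : Fin d) (k : ℕ) (x : Fin d → ℕ) : Fin d → ℕ :=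
  fun j => if j = i then (if x i < k then x i else x i + 1) else x j

/-- `InsertsTo i A B`: the array `B` is obtained from the array `A` by a single
`x_i`-insertion, i.e. by inserting one `(d-1)`-dimensional hyperplane (with arbitrary
entries) orthogonal to the `x_i`-axis. -/
def InsertsTo {q d : ℕ} (i : Fin d) (A B : Arr q d) : Prop :=
  (∀ j, B.size j = if j = i then A.size j + 1 else A.size j) ∧
  ∃ k ≤ A.size i, ∀ (x : Fin d → ℕ) (hx : ∀ j, x j < A.size j)
    (hx' : ∀ j, insIdx i k x j < B.size j),
    A.val x hx = B.val (insIdx i k x) hx'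

/-- `DeletesTo i A B`: the array `B` is obtained from `A` by a single `x_i`-deletion,
the inverse operation of an `x_i`-insertion. -/
def DeletesTo {q d : ℕ} (i : Fin d) (A B : Arr q d) : Prop :=
  InsertsTo i B A

/-- `Steps R t A B`: the array `B` is obtained from the array `A` by performing, for each
axis `i`, exactly `t i` operations of type `R i` (in some order). -/
inductive Steps {q d : ℕ} (R : Fin d → Arr q d → Arr q d → Prop) :
    (Fin d → ℕ) → Arr q d → Arr q d → Prop
  | refl (A : Arr q d) : Steps R 0 A A
  | step {t : Fin d → ℕ} {A B C : Arr q d} (i : Fin d) :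
      R i A B → Steps R t B C → Steps R (t + Pi.single i 1) A C

/-- The deletion ball `D_t(X)`: all arrays obtainable from `X` by a `t`-deletion,
i.e. by `t i` `x_i`-deletions for each axis `i`. -/
def delBall {q d : ℕ} (t : Fin d → ℕ) (X : Arr q d) : Set (Arr q d) :=
  {Y | Steps DeletesTo t X Y}

/-- The insertion ball `I_t(X)`: all arrays obtainable from `X` by a `t`-insertion,
i.e. by `t i` `x_i`-insertions for each axis `i`. -/
def insBall {q d : ℕ} (t : Fin d → ℕ) (X : Arr q d) : Set (Arr q d) :=
  {Y | Steps InsertsTo t X Y}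

/-- The insertion-deletion ball `ID_t(X)`: all arrays obtainable from `X` by a
`t^del`-deletion followed by a `t^ins`-insertion, for some decomposition
`t = t^ins + t^del`. -/
def insDelBall {q d : ℕ} (t : Fin d → ℕ) (X : Arr q d) : Set (Arr q d) :=
  {Z | ∃ tins tdel : Fin d → ℕ, tins + tdel = t ∧
    ∃ W ∈ delBall tdel X, Z ∈ insBall tins W}

/-- `Σ_q^{n^{⊗d}}`: the set of `q`-ary `d`-dimensional arrays of cubic size `n × ⋯ × n`. -/
def cube (q d n : ℕ) : Set (Arr q d) := {A | A.size = fun _ => n}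

/-- A code `C` is a `t`-deletion-correcting code if the deletion balls `D_t(X)`, `X ∈ C`,
are pairwise disjoint. -/
def IsDelCode {q d : ℕ} (t : Fin d → ℕ) (C : Set (Arr q d)) : Prop :=
  ∀ X ∈ C, ∀ Y ∈ C, X ≠ Y → delBall t X ∩ delBall t Y = ∅

/-- A code `C` is a `t`-insertion-correcting code if the insertion balls `I_t(X)`,
`X ∈ C`, are pairwise disjoint. -/
def IsInsCode {q d : ℕ} (t : Fin d → ℕ) (C : Set (Arr q d)) : Prop :=
  ∀ X ∈ C, ∀ Y ∈ C, X ≠ Y → insBall t X ∩ insBall t Y = ∅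

/-- A code `C` is a `t`-insdel-correcting code if the insertion-deletion balls `ID_t(X)`,
`X ∈ C`, are pairwise disjoint. -/
def IsInsDelCode {q d : ℕ} (t : Fin d → ℕ) (C : Set (Arr q d)) : Prop :=
  ∀ X ∈ C, ∀ Y ∈ C, X ≠ Y → insDelBall t X ∩ insDelBall t Y = ∅

/-- The projection `P_κ` of a `(d+1)`-dimensional array `X` whose axis `x_κ` has length
`n`: it groups, for each fixed choice of the other coordinates, the `n` entries of `X`
along the `x_κ`-axis into a single symbol of `Σ_{q^n}`, preserving the order of the
remaining axes. -/
noncomputable def proj {q d : ℕ} (n : ℕ) (κ : Fin (d + 1)) (X : Arr q (d + 1))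
    (hκ : X.size κ = n) : Arr (q ^ n) d where
  size := fun j => X.size (κ.succAbove j)
  val := fun y hy => finFunctionFinEquiv (fun a : Fin n =>
    X.val (κ.insertNth (a : ℕ) y) (by
      intro i
      rcases eq_or_ne i κ with h | h
      · subst h
        simp [Fin.insertNth_apply_same, hκ, a.isLt]
      · obtain ⟨j, rfl⟩ := Fin.exists_succAbove_eq h
        simpa [Fin.insertNth_apply_succAbove] using hy j))
section Aux

variable {q d n : ℕ}

lemma Arr.ext' {A B : Arr q d} (hs : A.size = B.size)
    (hv : ∀ x hx hx', A.val x hx = B.val x hx') : A = B := by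
  cases A with | mk sA vA =>
  cases B with | mk sB vB =>
  cases hs
  simp only [Arr.mk.injEq, heq_eq_eq, true_and]
  funext x hx
  exact hv x hx hx

lemma Arr.val_congr (A : Arr q d) {x y : Fin d → ℕ} (h : x = y)
    (hx : ∀ i, x i < A.size i) (hy : ∀ i, y i < A.size i) :
    A.val x hx = A.val y hy := by subst h; rfl

lemma insIdx_insertNth (κ : Fin (d + 1)) (j : Fin d) (k a : ℕ) (y : Fin d → ℕ) :
    insIdx (κ.succAbove j) k (κ.insertNth a y) = κ.insertNth a (insIdx j k y) := by
  funext i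
  refine Fin.succAboveCases κ ?_ (fun j' => ?_) i
  · simp [insIdx, (Fin.succAbove_ne κ j).symm]
  · by_cases h : j' = j <;>
      simp [insIdx, Fin.insertNth_apply_succAbove, Fin.succAbove_right_inj, h]

lemma insIdx_eq_insertNth (κ : Fin (d + 1)) (j : Fin d) (k : ℕ) (x : Fin (d + 1) → ℕ) :
    insIdx (κ.succAbove j) k x
      = κ.insertNth (x κ) (insIdx j k (fun j' => x (κ.succAbove j'))) := by
  conv_lhs => rw [← Fin.insertNth_self_removeNth κ x]
  rw [insIdx_insertNth]
  rfl

lemma insertNth_lt_size (κ : Fin (d + 1)) (Z : Arr q (d + 1)) (hZ : Z.size κ = n)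
    {y : Fin d → ℕ} (hy : ∀ j, y j < Z.size (κ.succAbove j)) (a : Fin n) :
    ∀ i, (κ.insertNth (a : ℕ) y : Fin (d + 1) → ℕ) i < Z.size i := by
  intro i
  refine Fin.succAboveCases κ ?_ (fun j => ?_) i
  · simp [hZ, a.isLt]
  · simpa using hy j

lemma proj_val_symm (κ : Fin (d + 1)) (Z : Arr q (d + 1)) (hZ : Z.size κ = n)
    (y : Fin d → ℕ) (hy : ∀ j, y j < (proj n κ Z hZ).size j) (a : Fin n)
    (h : ∀ i, (κ.insertNth (a : ℕ) y : Fin (d + 1) → ℕ) i < Z.size i) :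
    finFunctionFinEquiv.symm ((proj n κ Z hZ).val y hy) a
      = Z.val (κ.insertNth (a : ℕ) y) h := by
  simp only [proj, Equiv.symm_apply_apply]

/-- Expansion, the inverse of `proj`. -/
noncomputable def expand (n : ℕ) (κ : Fin (d + 1)) (W : Arr (q ^ n) d) : Arr q (d + 1) where
  size := κ.insertNth n W.size
  val := fun x hx =>
    (finFunctionFinEquiv.symm (W.val (fun j => x (κ.succAbove j))
        (fun j => by simpa [Fin.insertNth_apply_succAbove] using hx (κ.succAbove j))))
      ⟨x κ, by simpa [Fin.insertNth_apply_same] using hx κ⟩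

lemma expand_size_κ (κ : Fin (d + 1)) (W : Arr (q ^ n) d) :
    (expand n κ W : Arr q (d + 1)).size κ = n := by
  simp [expand]

lemma expand_val (κ : Fin (d + 1)) (W : Arr (q ^ n) d) (x : Fin (d + 1) → ℕ)
    (hx : ∀ i, x i < (expand n κ W : Arr q (d + 1)).size i)
    (hPx : ∀ j, x (κ.succAbove j) < W.size j) (hκ' : x κ < n) :
    (expand n κ W : Arr q (d + 1)).val x hx
      = (finFunctionFinEquiv.symm (W.val (fun j => x (κ.succAbove j)) hPx)) ⟨x κ, hκ'⟩ :=
  rfl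

lemma proj_expand (κ : Fin (d + 1)) (W : Arr (q ^ n) d)
    (h : (expand n κ W : Arr q (d + 1)).size κ = n) :
    proj n κ (expand n κ W) h = W := by
  refine Arr.ext' ?_ ?_
  · funext j; simp [proj, expand]
  · intro y hy hy'
    refine finFunctionFinEquiv.symm.injective ?_
    funext a
    rw [proj_val_symm κ _ h y hy a (insertNth_lt_size κ _ h (fun j => hy j) a)]
    rw [expand_val κ W _ _ (fun j => by simpa [proj, expand] using hy j)
      (by simp)]
    simp only [Fin.insertNth_apply_succAbove, Fin.insertNth_apply_same, Fin.eta]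

lemma expand_proj (κ : Fin (d + 1)) (Z : Arr q (d + 1)) (hZ : Z.size κ = n) :
    expand n κ (proj n κ Z hZ) = Z := by
  have hins : ∀ x : Fin (d + 1) → ℕ, κ.insertNth (x κ) (fun j => x (κ.succAbove j)) = x :=
    fun x => Fin.insertNth_self_removeNth κ x
  refine Arr.ext' ?_ ?_
  · funext i
    refine Fin.succAboveCases κ ?_ (fun j => ?_) i
    · simp [expand, hZ]
    · simp [expand, proj]
  · intro x hx hx'
    rw [expand_val κ _ x hx (fun j => by simpa [expand, proj] using hx (κ.succAbove j))
      (by simpa [expand] using hx κ)]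
    rw [proj_val_symm κ Z hZ _ _ _ (fun i => by simpa [hins x] using hx' i)]
    exact Z.val_congr (hins x) _ _

lemma proj_inj {κ : Fin (d + 1)} {Z₁ Z₂ : Arr q (d + 1)} (hZ₁ : Z₁.size κ = n)
    (hZ₂ : Z₂.size κ = n) (h : proj n κ Z₁ hZ₁ = proj n κ Z₂ hZ₂) : Z₁ = Z₂ := by
  rw [← expand_proj κ Z₁ hZ₁, ← expand_proj κ Z₂ hZ₂, h]

end Aux
section StepsLemmas

variable {q d n : ℕ}

lemma insertsTo_proj (κ : Fin (d + 1)) (j : Fin d) {A B : Arr q (d + 1)}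
    (hA : A.size κ = n) (hB : B.size κ = n)
    (h : InsertsTo (κ.succAbove j) A B) :
    InsertsTo j (proj n κ A hA) (proj n κ B hB) := by
  obtain ⟨hsize, k, hk, hval⟩ := h
  constructor
  · intro j'
    show B.size (κ.succAbove j') = _
    rw [hsize (κ.succAbove j')]
    by_cases hj : j' = j <;> simp [hj, Fin.succAbove_right_inj, proj]
  · refine ⟨k, hk, ?_⟩
    intro y hy hy'
    refine finFunctionFinEquiv.symm.injective ?_
    funext a
    have hyA : ∀ i, (κ.insertNth (a : ℕ) y : Fin (d + 1) → ℕ) i < A.size i :=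
      insertNth_lt_size κ A hA (fun j' => hy j') a
    have hyB : ∀ i, (κ.insertNth (a : ℕ) (insIdx j k y) : Fin (d + 1) → ℕ) i < B.size i :=
      insertNth_lt_size κ B hB (fun j' => hy' j') a
    rw [proj_val_symm κ A hA y hy a hyA, proj_val_symm κ B hB _ hy' a hyB]
    refine (hval _ hyA (by rw [insIdx_insertNth]; exact hyB)).trans ?_
    exact B.val_congr (insIdx_insertNth κ j k (a : ℕ) y) _ _

lemma insertsTo_lift (κ : Fin (d + 1)) (j : Fin d) {A : Arr q (d + 1)}
    (hA : A.size κ = n) {B' : Arr (q ^ n) d}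
    (h : InsertsTo j B' (proj n κ A hA)) :
    ∃ B : Arr q (d + 1), ∃ hB : B.size κ = n,
      proj n κ B hB = B' ∧ InsertsTo (κ.succAbove j) B A := by
  obtain ⟨hsize, k, hk, hval⟩ := h
  refine ⟨expand n κ B', expand_size_κ κ B', proj_expand κ B' _, ?_, k,
      (by simpa [expand] using hk), ?_⟩
  · intro i
    refine Fin.succAboveCases κ ?_ (fun j' => ?_) i
    · rw [if_neg (Fin.ne_succAbove κ j)]
      rw [hA, expand_size_κ]
    · have := hsize j'
      by_cases hj : j' = j <;>
        simp_all [proj, expand, Fin.succAbove_right_inj]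
  · intro x hx hx'
    have hPx : ∀ j', x (κ.succAbove j') < B'.size j' := by
      intro j'
      simpa [expand] using hx (κ.succAbove j')
    have hxκ : x κ < n := by simpa [expand] using hx κ
    rw [expand_val κ B' x hx hPx hxκ]
    have h2 : ∀ j'', insIdx j k (fun j' => x (κ.succAbove j')) j''
        < (proj n κ A hA).size j'' := by
      intro j''
      have := hx' (κ.succAbove j'')
      by_cases hj : j'' = j <;>
        simpa [insIdx, Fin.succAbove_right_inj, hj, proj] using this
    rw [hval _ hPx h2]
    have hfull : ∀ i, (κ.insertNth ((⟨x κ, hxκ⟩ : Fin n) : ℕ)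
        (insIdx j k (fun j' => x (κ.succAbove j'))) : Fin (d + 1) → ℕ) i < A.size i := by
      intro i
      have e := insIdx_eq_insertNth κ j k x
      rw [show ((⟨x κ, hxκ⟩ : Fin n) : ℕ) = x κ from rfl, ← e]
      exact hx' i
    rw [proj_val_symm κ A hA _ h2 ⟨x κ, hxκ⟩ hfull]
    exact A.val_congr (insIdx_eq_insertNth κ j k x).symm _ _

lemma steps_size {t : Fin d → ℕ} {A Z : Arr q d} (h : Steps DeletesTo t A Z) :
    ∀ i, t i = 0 → Z.size i = A.size i := by
  induction h with
  | refl A => intro i _; rfl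
  | @step t A B C i' hAB hBZ ih =>
    intro i ht
    have hadd : t i + Pi.single (M := fun _ => ℕ) i' 1 i = 0 := by simpa using ht
    have hii' : i ≠ i' := by
      rintro rfl
      simp [Pi.single_eq_same] at hadd
    have hAB' : A.size i = B.size i := by
      have := hAB.1 i
      rwa [if_neg hii'] at this
    rw [ih i (by omega), ← hAB']

end StepsLemmas
section Transfer

variable {q d n : ℕ}

lemma vec_pull (κ : Fin (d + 1)) (t : Fin (d + 1) → ℕ) (j : Fin d) :
    (fun j' => (t + Pi.single (κ.succAbove j) 1 : Fin (d + 1) → ℕ) (κ.succAbove j'))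
      = (fun j' => t (κ.succAbove j')) + Pi.single j 1 := by
  funext j'
  by_cases h : j' = j <;>
    simp [Pi.single_apply, Fin.succAbove_right_inj, h]

lemma vec_push (κ : Fin (d + 1)) (s : Fin d → ℕ) (j : Fin d) :
    (κ.insertNth (0 : ℕ) (s + Pi.single j 1) : Fin (d + 1) → ℕ)
      = κ.insertNth (0 : ℕ) s + Pi.single (κ.succAbove j) 1 := by
  funext i
  refine Fin.succAboveCases κ ?_ (fun j' => ?_) i
  · simp [Pi.single_apply, (Fin.succAbove_ne κ j).symm]
  · by_cases h : j' = j <;>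
      simp [Pi.single_apply, Fin.succAbove_right_inj, h]

lemma vec_insert_zero (κ : Fin (d + 1)) (r : Fin (d + 1) → ℕ) (h : r κ = 0) :
    (κ.insertNth (0 : ℕ) (fun j => r (κ.succAbove j)) : Fin (d + 1) → ℕ) = r := by
  funext i
  refine Fin.succAboveCases κ ?_ (fun j' => ?_) i
  · simp [h]
  · simp

lemma vec_insert_zero_zero (κ : Fin (d + 1)) :
    (κ.insertNth (0 : ℕ) (0 : Fin d → ℕ) : Fin (d + 1) → ℕ) = 0 := by
  funext i
  refine Fin.succAboveCases κ ?_ (fun j' => ?_) i <;> simp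

lemma steps_proj {t : Fin (d + 1) → ℕ} {A Z : Arr q (d + 1)} (κ : Fin (d + 1))
    (h : Steps DeletesTo t A Z) :
    t κ = 0 → ∀ (hA : A.size κ = n) (hZ : Z.size κ = n),
      Steps DeletesTo (fun j => t (κ.succAbove j)) (proj n κ A hA) (proj n κ Z hZ) := by
  induction h with
  | refl A =>
    intro _ hA hZ
    exact Steps.refl _
  | @step t A B C i hAB hBC ih =>
    intro ht hA hZ
    have hadd : t κ + Pi.single (M := fun _ => ℕ) i 1 κ = 0 := by simpa using ht
    have hiκ : i ≠ κ := by
      rintro rfl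
      simp [Pi.single_eq_same] at hadd
    have htκ : t κ = 0 := by omega
    obtain ⟨j, rfl⟩ := Fin.exists_succAbove_eq hiκ
    have hB : B.size κ = n := by
      have := hAB.1 κ
      rw [if_neg (Fin.ne_succAbove κ j)] at this
      rw [← this]; exact hA
    have hstep : DeletesTo j (proj n κ A hA) (proj n κ B hB) :=
      insertsTo_proj κ j hB hA hAB
    have := Steps.step j hstep (ih htκ hB hZ)
    rwa [← vec_pull κ t j] at this

lemma steps_lift {s : Fin d → ℕ} {A' W : Arr (q ^ n) d} (κ : Fin (d + 1))
    (h : Steps DeletesTo s A' W) :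
    ∀ (A : Arr q (d + 1)) (hA : A.size κ = n), proj n κ A hA = A' →
      ∃ Z : Arr q (d + 1), ∃ hZ : Z.size κ = n, proj n κ Z hZ = W ∧
        Steps DeletesTo (κ.insertNth (0 : ℕ) s) A Z := by
  induction h with
  | refl A' =>
    intro A hA hpA
    refine ⟨A, hA, hpA, ?_⟩
    rw [vec_insert_zero_zero κ]
    exact Steps.refl A
  | @step s A' B' W j hAB hBW ih =>
    intro A hA hpA
    rw [← hpA] at hAB
    obtain ⟨B, hB, hpB, hins⟩ := insertsTo_lift κ j hA hAB
    obtain ⟨Z, hZ, hpZ, hsteps⟩ := ih B hB hpB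
    refine ⟨Z, hZ, hpZ, ?_⟩
    rw [vec_push κ s j]
    exact Steps.step (κ.succAbove j) hins hsteps

end Transfer

/-- **Claim 1** (deletion case). Let `r₁, r₂` be nonnegative integer vectors with
`r₁ κ = r₂ κ = 0`. For arrays `X` of size `(n+r₁ 1) × ⋯ × (n+r₁ d)` and `Y` of size
`(n+r₂ 1) × ⋯ × (n+r₂ d)`, `D_{r₁}(X) ∩ D_{r₂}(Y) ≠ ∅` iff
`D_{P_κ(r₁)}(P_κ(X)) ∩ D_{P_κ(r₂)}(P_κ(Y)) ≠ ∅`, where the right-hand balls consist of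
`d`-dimensional arrays over `Σ_{q^n}` and `P_κ(r)` drops the (zero) `κ`-th entry of `r`. -/
theorem statement4 (q n d : ℕ) (hq : 2 ≤ q) (κ : Fin (d + 1))
    (r₁ r₂ : Fin (d + 1) → ℕ) (h1 : r₁ κ = 0) (h2 : r₂ κ = 0)
    (X Y : Arr q (d + 1))
    (hX : X.size = fun i => n + r₁ i) (hY : Y.size = fun i => n + r₂ i)
    (hXκ : X.size κ = n) (hYκ : Y.size κ = n) :
    (delBall r₁ X ∩ delBall r₂ Y).Nonempty ↔
    (delBall (fun j => r₁ (κ.succAbove j)) (proj n κ X hXκ) ∩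
      delBall (fun j => r₂ (κ.succAbove j)) (proj n κ Y hYκ)).Nonempty := by
  constructor
  · rintro ⟨Z, hZ1, hZ2⟩
    have hZκ : Z.size κ = n := by rw [steps_size hZ1 κ h1, hXκ]
    exact ⟨proj n κ Z hZκ, steps_proj κ hZ1 h1 hXκ hZκ, steps_proj κ hZ2 h2 hYκ hZκ⟩
  · rintro ⟨W, hW1, hW2⟩
    obtain ⟨Z₁, hZ₁, hpZ₁, hs₁⟩ := steps_lift κ hW1 X hXκ rfl
    obtain ⟨Z₂, hZ₂, hpZ₂, hs₂⟩ := steps_lift κ hW2 Y hYκ rfl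
    rw [vec_insert_zero κ r₁ h1] at hs₁
    rw [vec_insert_zero κ r₂ h2] at hs₂
    have hZeq : Z₁ = Z₂ := proj_inj hZ₁ hZ₂ (hpZ₁.trans hpZ₂.symm)
    exact ⟨Z₁, hs₁, by rw [hZeq]; exact hs₂⟩
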